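/- Let E ⊂ [−1/2, 1/2] be the Cantor-type set built from nested families 𝓘ₙ of closed intervals, where each interval of 𝓘ₙ of length rₙ contains mₙ₊₁ equally and maximally spaced intervals of 𝓘ₙ₊₁ of length rₙ₊₁, with mₙ₊₁·(rₙ₊₁)^s = rₙ^s and rₙ = 3^{−2^{n+m_s}}. Then the minimal gap sₙ₊₁ between distinct intervals of 𝓘ₙ₊₁ satisfies sₙ₊₁ ≍ rₙ^{1−s}·rₙ₊₁^{s}, and if m_s is chosen sufficiently large (depending on s < 1) then 3^{n+1}·rₙ₊₁ < sₙ₊₁ < rₙ/10 for all n ≥ 0. -/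

import Mathlib

/-- The scales `rₙ = 3^{-2^{n+ms}}` of the Cantor construction. -/
noncomputable def rScale (ms n : ℕ) : ℝ := (3 : ℝ) ^ (-(2 ^ (n + ms) : ℤ))

/-- The spacing `sₙ₊₁` between consecutive intervals of generation `n+1`: inside an interval
of length `rₙ` one places `mₙ₊₁ = 3^{p·2ⁿ}` equally spaced intervals of length `rₙ₊₁`
with the spacing as large as possible, so the gap is
`(rₙ − mₙ₊₁·rₙ₊₁)/(mₙ₊₁ − 1)`. -/
noncomputable def gapAfter (p ms n : ℕ) : ℝ :=
  (rScale ms n - (3 : ℝ) ^ (p * 2 ^ n) * rScale ms (n + 1)) / ((3 : ℝ) ^ (p * 2 ^ n) - 1)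

lemma gap_bounds_abstract (x y : ℝ) (hx : 3 ≤ x) (hy : 0 < y) (hxy : x * y ≤ 1/3) :
    (2/3) * (y/x) ≤ (y - x * y^2)/(x - 1) ∧ (y - x*y^2)/(x-1) ≤ (3/2) * (y/x) := by
  have hx0 : (0:ℝ) < x := by linarith
  have hx1 : (0:ℝ) < x - 1 := by linarith
  have hxy0 : 0 < x * y := mul_pos hx0 hy
  constructor
  · rw [show (2/3) * (y/x) = (2*y)/(3*x) by ring, div_le_div_iff₀ (by positivity) hx1]
    nlinarith [mul_nonneg (le_of_lt hxy0) (by linarith : (0:ℝ) ≤ 1/3 - x*y)]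
  · rw [show (3/2) * (y/x) = (3*y)/(2*x) by ring, div_le_div_iff₀ hx1 (by positivity)]
    nlinarith [sq_nonneg (x*y), mul_nonneg hy.le (by linarith : (0:ℝ) ≤ x - 3)]

lemma rScale_pos (ms n : ℕ) : 0 < rScale ms n := zpow_pos (by norm_num) _

lemma rScale_succ (ms n : ℕ) : rScale ms (n+1) = rScale ms n ^ 2 := by
  unfold rScale
  rw [sq, ← zpow_add₀ (by norm_num : (3:ℝ) ≠ 0)]
  congr 1
  have h : n + 1 + ms = (n + ms) + 1 := by ring
  rw [h, pow_succ]
  ring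

lemma gap_eq (p ms n : ℕ) :
    gapAfter p ms n =
      (rScale ms n - (3:ℝ)^(p*2^n) * (rScale ms n)^2) / ((3:ℝ)^(p*2^n) - 1) := by
  rw [gapAfter, rScale_succ]

lemma gap_key (p ms n : ℕ) (hp : 0 < p) (hlt : p < 2^ms) :
    (2/3) * (3:ℝ) ^ (-((p:ℤ)*2^n) - 2^(n+ms)) ≤ gapAfter p ms n ∧
    gapAfter p ms n ≤ (3/2) * (3:ℝ) ^ (-((p:ℤ)*2^n) - 2^(n+ms)) := by
  have ha1 : 1 ≤ p * 2^n := Nat.one_le_iff_ne_zero.mpr (by positivity)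
  have hab : p * 2^n + 1 ≤ 2^(n+ms) := by
    have h1 : p * 2^n < 2^ms * 2^n := mul_lt_mul_of_pos_right hlt (Nat.two_pow_pos n)
    have h2 : 2^ms * 2^n = 2^(n+ms) := by rw [pow_add]; ring
    omega
  set x : ℝ := (3:ℝ) ^ (p * 2^n) with hxdef
  set y : ℝ := rScale ms n with hydef
  have hy : 0 < y := rScale_pos ms n
  have hx : (3:ℝ) ≤ x := by
    calc (3:ℝ) = 3^1 := (pow_one 3).symm
    _ ≤ 3^(p*2^n) := pow_le_pow_right₀ (by norm_num) ha1
  have hxy : x * y ≤ 1/3 := by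
    have : x * y = (3:ℝ) ^ ((p*2^n : ℕ) - (2^(n+ms) : ℤ)) := by
      rw [hxdef, hydef, rScale, ← zpow_natCast (3:ℝ) (p*2^n),
        ← zpow_add₀ (by norm_num : (3:ℝ) ≠ 0)]
      congr 1
    rw [this, show (1:ℝ)/3 = (3:ℝ)^(-1 : ℤ) by norm_num]
    apply (zpow_le_zpow_iff_right₀ (by norm_num : (1:ℝ) < 3)).mpr
    have : ((p*2^n : ℕ) : ℤ) + 1 ≤ ((2^(n+ms) : ℕ) : ℤ) := by exact_mod_cast hab
    push_cast at this ⊢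
    omega
  have hT : y / x = (3:ℝ) ^ (-((p:ℤ)*2^n) - 2^(n+ms)) := by
    rw [hxdef, hydef, rScale, ← zpow_natCast (3:ℝ) (p*2^n),
      ← zpow_sub₀ (by norm_num : (3:ℝ) ≠ 0)]
    congr 1
    push_cast
    ring
  rw [gap_eq, ← hydef, ← hxdef, ← hT]
  exact gap_bounds_abstract x y hx hy hxy

lemma T_eq (p ms n : ℕ) :
    rScale ms n ^ (1 - (p:ℝ)/2^ms) * rScale ms (n+1) ^ ((p:ℝ)/2^ms)
      = (3:ℝ) ^ (-((p:ℤ)*2^n) - 2^(n+ms)) := by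
  have h3 : (0:ℝ) ≤ 3 := by norm_num
  rw [rScale, rScale, ← Real.rpow_intCast (3:ℝ) (-(2^(n+ms))),
    ← Real.rpow_intCast (3:ℝ) (-(2^(n+1+ms))),
    ← Real.rpow_mul h3, ← Real.rpow_mul h3,
    ← Real.rpow_add (by norm_num : (0:ℝ) < 3),
    ← Real.rpow_intCast (3:ℝ) (-((p:ℤ)*2^n) - 2^(n+ms))]
  congr 1
  have h2 : ((2:ℝ))^ms ≠ 0 := by positivity
  push_cast
  rw [show n+1+ms = (n+1)+ms from rfl, pow_add, pow_add, pow_succ]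
  field_simp
  ring

/-- For the Cantor-type set of dimension `s = p/2^{ms} ∈ (0,1)`: the gaps satisfy
`sₙ₊₁ ≍ rₙ^{1−s}·rₙ₊₁^{s}` with absolute constants, and if the representation of `s` is
chosen with `ms` sufficiently large (replacing `(p, ms)` by `(p·2ʲ, ms+j)`), then
`3^{n+1}·rₙ₊₁ < sₙ₊₁ < rₙ/10` for all `n ≥ 0`. -/
theorem stmt15 :
    (∃ c C : ℝ, 0 < c ∧ 0 < C ∧ ∀ p ms : ℕ, 0 < p → p < 2 ^ ms → ∀ n : ℕ,
      c * rScale ms n ^ (1 - (p : ℝ) / 2 ^ ms) * rScale ms (n + 1) ^ ((p : ℝ) / 2 ^ ms)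
          ≤ gapAfter p ms n ∧
      gapAfter p ms n
          ≤ C * rScale ms n ^ (1 - (p : ℝ) / 2 ^ ms)
              * rScale ms (n + 1) ^ ((p : ℝ) / 2 ^ ms)) ∧
    (∀ p ms : ℕ, 0 < p → p < 2 ^ ms → ∃ M : ℕ, ∀ j : ℕ, M ≤ j → ∀ n : ℕ,
      3 ^ (n + 1) * rScale (ms + j) (n + 1) < gapAfter (p * 2 ^ j) (ms + j) n ∧
      gapAfter (p * 2 ^ j) (ms + j) n < rScale (ms + j) n / 10) := by
  constructor
  · refine ⟨2/3, 3/2, by norm_num, by norm_num, fun p ms hp hlt n => ?_⟩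
    have h := gap_key p ms n hp hlt
    rw [mul_assoc, mul_assoc, T_eq]
    exact h
  · intro p ms hp hlt
    refine ⟨2, fun j hj n => ?_⟩
    set p' := p * 2^j with hp'def
    set ms' := ms + j with hms'def
    have hp' : 0 < p' := Nat.mul_pos hp (Nat.two_pow_pos j)
    have hlt' : p' < 2^ms' := by
      have h1 : p * 2^j < 2^ms * 2^j := mul_lt_mul_of_pos_right hlt (Nat.two_pow_pos j)
      have h2 : 2^ms * 2^j = 2^ms' := by rw [hms'def, pow_add]
      omega
    have hk := gap_key p' ms' n hp' hlt'
    have e2 : (4:ℕ) ≤ 2^j := by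
      calc (4:ℕ) = 2^2 := rfl
      _ ≤ 2^j := Nat.pow_le_pow_right (by norm_num) hj
    have e3 : n + 3 ≤ 2^n * 4 := by
      have h1 : n < 2^n := Nat.lt_two_pow_self (n := n)
      calc n + 3 ≤ (n+1) * 4 := by omega
      _ ≤ 2^n * 4 := Nat.mul_le_mul_right 4 h1
    have key : n + 3 + p' * 2^n ≤ 2^(n+ms') := by
      have e1 : 2^(n+ms') = 2^n * 2^j * 2^ms := by
        rw [hms'def, show n+(ms+j) = n + ms + j from by ring, pow_add, pow_add]; ring
      have h5 : p' * 2^n + 2^n * 2^j ≤ 2^n * 2^j * 2^ms := by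
        calc p' * 2^n + 2^n * 2^j = 2^n * 2^j * (p + 1) := by rw [hp'def]; ring
        _ ≤ 2^n * 2^j * 2^ms := Nat.mul_le_mul_left _ hlt
      have h6 : 2^n * 4 ≤ 2^n * 2^j := Nat.mul_le_mul_left _ e2
      rw [e1]
      linarith [h5, h6, e3]
    constructor
    · have hle : (3:ℝ)^(n+1) * rScale ms' (n+1)
          ≤ (3:ℝ)^((-((p':ℤ)*2^n) - 2^(n+ms')) - 2) := by
        rw [rScale, ← zpow_natCast (3:ℝ) (n+1), ← zpow_add₀ (by norm_num : (3:ℝ) ≠ 0)]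
        apply (zpow_le_zpow_iff_right₀ (by norm_num : (1:ℝ) < 3)).mpr
        have hkey : ((n:ℤ) + 3) + (p':ℤ)*2^n ≤ 2^(n+ms') := by exact_mod_cast key
        have h2 : (2:ℤ)^(n+1+ms') = 2*2^(n+ms') := by
          rw [show n+1+ms' = (n+ms')+1 from by ring, pow_succ]; ring
        push_cast
        linarith [hkey, h2]
      have h9 : (0:ℝ) < (3:ℝ)^(-((p':ℤ)*2^n) - 2^(n+ms')) := zpow_pos (by norm_num) _
      calc (3:ℝ)^(n+1) * rScale ms' (n+1)
          ≤ (3:ℝ)^((-((p':ℤ)*2^n) - 2^(n+ms')) - 2) := hle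
        _ < (2/3) * (3:ℝ)^(-((p':ℤ)*2^n) - 2^(n+ms')) := by
            rw [zpow_sub₀ (by norm_num : (3:ℝ) ≠ 0)]
            have h81 : ((3:ℝ)^(2:ℤ)) = 9 := by norm_num
            rw [h81]
            linarith [h9]
        _ ≤ gapAfter p' ms' n := hk.1
    · have hA4 : (4:ℕ) ≤ p' * 2^n := by
        have h1 : 2^j ≤ p' := Nat.le_mul_of_pos_left (2^j) hp
        have h2 : p' ≤ p' * 2^n := Nat.le_mul_of_pos_right p' (Nat.two_pow_pos n)
        omega
      have h9 : (0:ℝ) < rScale ms' n := rScale_pos _ _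
      calc gapAfter p' ms' n
          ≤ (3/2) * (3:ℝ)^(-((p':ℤ)*2^n) - 2^(n+ms')) := hk.2
        _ ≤ (3/2) * (3:ℝ)^((-4:ℤ) + -(2^(n+ms'))) := by
            have hA : (4:ℤ) ≤ (p':ℤ)*2^n := by exact_mod_cast hA4
            have hmono := (zpow_le_zpow_iff_right₀ (by norm_num : (1:ℝ) < 3)).mpr
              (show -((p':ℤ)*2^n) - 2^(n+ms') ≤ (-4:ℤ) + -(2^(n+ms')) by linarith)
            linarith [hmono]
        _ = (3/2) * ((3:ℝ)^(-4:ℤ) * rScale ms' n) := by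
            rw [rScale, ← zpow_add₀ (by norm_num : (3:ℝ) ≠ 0)]
        _ < rScale ms' n / 10 := by
            have h81 : ((3:ℝ)^(-4:ℤ)) = 1/81 := by norm_num
            rw [h81]
            linarith [h9]
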